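/- Let d ≥ 1, τ > d, γ > 0 and let ω ∈ [0,1]^d be Diophantine with parameters τ, γ. Let L > 0 and let F : ℝ → ℝ be a 1-periodic function satisfying F(θ₂) − F(θ₁) ≥ L(θ₂ − θ₁) for all 0 ≤ θ₁ ≤ θ₂ < 1. Then for every θ ∈ ℝ, every E ∈ ℂ, every δ > 0, and all distinct x, y ∈ ℤ^d with |F(θ + x·ω) − E| < δ and |F(θ + y·ω) − E| < δ, one has ‖x − y‖₁^τ ≥ Lγ/(2δ). -/

import Mathlib

open scoped BigOperators
open Matrix

/-- The ℓ¹ norm of a lattice point `x ∈ ℤ^d`, as a real number. -/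
noncomputable def norm1 {d : ℕ} (x : Fin d → ℤ) : ℝ := ∑ i, |(x i : ℝ)|

/-- The pairing `x · ω = ∑ i, x i * ω i`. -/
noncomputable def dotw {d : ℕ} (x : Fin d → ℤ) (ω : Fin d → ℝ) : ℝ := ∑ i, (x i : ℝ) * ω i

/-- `ω ∈ [0,1]^d` is Diophantine with parameters `τ, γ`:
`inf_{l ∈ ℤ} |l − x·ω| ≥ γ ‖x‖₁^{−τ}` for all `x ∈ ℤ^d \ {0}`. -/
def IsDiophantine {d : ℕ} (ω : Fin d → ℝ) (τ γ : ℝ) : Prop :=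
  (∀ i, ω i ∈ Set.Icc (0 : ℝ) 1) ∧
  ∀ x : Fin d → ℤ, x ≠ 0 → ∀ l : ℤ, γ * norm1 x ^ (-τ) ≤ |(l : ℝ) - dotw x ω|

/-- **Separation of resonant points** (Lemma 5.1): if `F` is 1-periodic and Lipschitz
monotone with constant `L` on `[0,1)`, and `ω` is Diophantine with parameters `τ, γ`, then any
two distinct `δ`-resonant points `x ≠ y` (i.e. `|F(θ + x·ω) − E| < δ` and
`|F(θ + y·ω) − E| < δ`) satisfy `‖x − y‖₁^τ ≥ Lγ/(2δ)`. -/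
theorem resonant_points_separation
    (d : ℕ) (hd : 1 ≤ d) (τ γ : ℝ) (hτ : (d : ℝ) < τ) (hγ : 0 < γ)
    (ω : Fin d → ℝ) (hω : IsDiophantine ω τ γ)
    (L : ℝ) (hL : 0 < L) (F : ℝ → ℝ)
    (hper : ∀ θ : ℝ, F (θ + 1) = F θ)
    (hmono : ∀ θ₁ θ₂ : ℝ, 0 ≤ θ₁ → θ₁ ≤ θ₂ → θ₂ < 1 → L * (θ₂ - θ₁) ≤ F θ₂ - F θ₁)
    (θ : ℝ) (E : ℂ) (δ : ℝ) (hδ : 0 < δ) (x y : Fin d → ℤ) (hxy : x ≠ y)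
    (hx : ‖(F (θ + dotw x ω) : ℂ) - E‖ < δ)
    (hy : ‖(F (θ + dotw y ω) : ℂ) - E‖ < δ) :
    L * γ / (2 * δ) ≤ norm1 (x - y) ^ τ := by
  obtain ⟨hω1, hω2⟩ := hω
  have hper' : Function.Periodic F 1 := hper
  have hFint : ∀ (t : ℝ) (n : ℤ), F (t + n) = F t := by
    intro t n
    simpa using (hper'.int_mul n) t
  set a := θ + dotw x ω with ha
  set b := θ + dotw y ω with hb
  have hFa : F a = F (Int.fract a) := by
    conv_lhs => rw [show a = Int.fract a + (⌊a⌋ : ℤ) by rw [Int.fract]; ring]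
    exact hFint _ _
  have hFb : F b = F (Int.fract b) := by
    conv_lhs => rw [show b = Int.fract b + (⌊b⌋ : ℤ) by rw [Int.fract]; ring]
    exact hFint _ _
  -- |F a - F b| < 2δ
  have hab : |F a - F b| < 2 * δ := by
    have h1 : ‖((F a : ℂ) - E) - ((F b : ℂ) - E)‖ < 2 * δ := by
      calc ‖((F a : ℂ) - E) - ((F b : ℂ) - E)‖
          ≤ ‖(F a : ℂ) - E‖ + ‖(F b : ℂ) - E‖ :=
            norm_sub_le _ _
        _ < δ + δ := add_lt_add hx hy
        _ = 2 * δ := by ring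
    have h2 : (((F a : ℂ) - E) - ((F b : ℂ) - E)) = ((F a - F b : ℝ) : ℂ) := by
      push_cast; ring
    rwa [h2, Complex.norm_real, Real.norm_eq_abs] at h1
  -- L * |fract a - fract b| < 2δ
  have hkey : L * |Int.fract a - Int.fract b| < 2 * δ := by
    rcases le_total (Int.fract a) (Int.fract b) with h | h
    · have := hmono _ _ (Int.fract_nonneg a) h (Int.fract_lt_one b)
      have habs : |Int.fract a - Int.fract b| = Int.fract b - Int.fract a := by
        rw [abs_sub_comm, abs_of_nonneg (by linarith)]
      rw [habs]
      calc L * (Int.fract b - Int.fract a) ≤ F (Int.fract b) - F (Int.fract a) := this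
        _ ≤ |F (Int.fract a) - F (Int.fract b)| := by
            rw [abs_sub_comm]; exact le_abs_self _
        _ = |F a - F b| := by rw [hFa, hFb]
        _ < 2 * δ := hab
    · have := hmono _ _ (Int.fract_nonneg b) h (Int.fract_lt_one a)
      have habs : |Int.fract a - Int.fract b| = Int.fract a - Int.fract b := by
        rw [abs_of_nonneg (by linarith)]
      rw [habs]
      calc L * (Int.fract a - Int.fract b) ≤ F (Int.fract a) - F (Int.fract b) := this
        _ ≤ |F (Int.fract a) - F (Int.fract b)| := le_abs_self _
        _ = |F a - F b| := by rw [hFa, hFb]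
        _ < 2 * δ := hab
  -- relate fract difference to Diophantine condition
  have hsub : dotw (x - y) ω = dotw x ω - dotw y ω := by
    simp [dotw, sub_mul, Finset.sum_sub_distrib]
  have hx0 : x - y ≠ 0 := sub_ne_zero.mpr hxy
  have hdio := hω2 (x - y) hx0 (⌊a⌋ - ⌊b⌋)
  have hfr : |((⌊a⌋ - ⌊b⌋ : ℤ) : ℝ) - dotw (x - y) ω| = |Int.fract a - Int.fract b| := by
    have : ((⌊a⌋ - ⌊b⌋ : ℤ) : ℝ) - dotw (x - y) ω = -(Int.fract a - Int.fract b) := by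
      rw [hsub]
      unfold Int.fract
      push_cast
      simp only [ha, hb]
      ring
    rw [this, abs_neg]
  rw [hfr] at hdio
  -- positivity of norm1
  have hN : 0 < norm1 (x - y) := by
    obtain ⟨i, hi⟩ := Function.ne_iff.mp hx0
    have h1 : (0 : ℝ) < |(((x - y) i : ℤ) : ℝ)| := by
      rw [abs_pos]
      exact_mod_cast hi
    calc (0 : ℝ) < |(((x - y) i : ℤ) : ℝ)| := h1
      _ ≤ norm1 (x - y) := by
        unfold norm1
        exact Finset.single_le_sum (f := fun j => |(((x - y) j : ℤ) : ℝ)|) (fun j _ => abs_nonneg _) (Finset.mem_univ i)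
  have hNτ : 0 < norm1 (x - y) ^ τ := Real.rpow_pos_of_pos hN τ
  have hneg : norm1 (x - y) ^ (-τ) = (norm1 (x - y) ^ τ)⁻¹ := Real.rpow_neg hN.le τ
  have hmain : L * (γ * (norm1 (x - y) ^ τ)⁻¹) ≤ 2 * δ := by
    rw [← hneg]
    calc L * (γ * norm1 (x - y) ^ (-τ)) ≤ L * |Int.fract a - Int.fract b| :=
          mul_le_mul_of_nonneg_left hdio hL.le
      _ ≤ 2 * δ := hkey.le
  rw [div_le_iff₀ (by positivity)]
  have := mul_le_mul_of_nonneg_right hmain hNτ.le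
  calc L * γ = L * (γ * (norm1 (x - y) ^ τ)⁻¹) * norm1 (x - y) ^ τ := by
        field_simp
    _ ≤ 2 * δ * norm1 (x - y) ^ τ := this
    _ = norm1 (x - y) ^ τ * (2 * δ) := by ring
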